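/- For α ∈ ℕ, α ≥ 1, n ≥ 1, and 0 ≤ i, j ≤ n with i ≥ j, let R^{(α)}(n;i,j) = (-1)^{n(α+i+j) - binom(i,2) - binom(j,2)} F_{α+i+j} binom(α+n+i, n-j)_F binom(α+n+j, n-i)_F binom(α+i+j-1, i)_F binom(α+i+j-1, j)_F, and let C^{(α)}(k;i,j) = (-1)^{k(α+i+j) - binom(i,2) - binom(j,2)} F_{α+2k} binom(k,i)_F binom(k,j)_F binom(α+k+i-1, k)_F binom(α+k+j-1, k)_F. Then R^{(α)}(n+1;i,j) - R^{(α)}(n;i,j) = C^{(α)}(n+1;i,j). -/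

import Mathlib

/-- The Fibonomial coefficient `∏_{i=1}^k F_{m-i+1}/F_i`, as a real number. -/
noncomputable def fibinom (m k : ℕ) : ℝ :=
  ∏ j ∈ Finset.range k, (Nat.fib (m - j) : ℝ) / (Nat.fib (j + 1) : ℝ)

open Nat Finset


lemma fib_quad (m : ℕ) :
    (fib (m+1) : ℤ)^2 - fib (m+1) * fib m - (fib m)^2 = (-1)^m := by
  induction m with
  | zero => norm_num
  | succ m ih =>
    rw [Nat.fib_add_two]
    push_cast
    rw [pow_succ]
    linear_combination (-1 : ℤ) * ih

lemma fib_vajda (m h k : ℕ) :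
    (fib (m+h) : ℤ) * fib (m+k) - fib m * fib (m+h+k) = (-1)^m * fib h * fib k := by
  match h, k with
  | 0, k => simp [mul_comm]
  | h+1, 0 => simp; ring
  | h+1, k+1 =>
    have e1 : (fib (m+(h+1)) : ℤ) = fib m * fib h + fib (m+1) * fib (h+1) := by
      rw [show m+(h+1) = m+h+1 from rfl, Nat.fib_add]; push_cast; ring
    have e2 : (fib (m+(k+1)) : ℤ) = fib m * fib k + fib (m+1) * fib (k+1) := by
      rw [show m+(k+1) = m+k+1 from rfl, Nat.fib_add]; push_cast; ring
    have e3 : (fib (m+(h+1)+(k+1)) : ℤ) = fib m * fib (h+k+1) + fib (m+1) * fib (h+k+2) := by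
      rw [show m+(h+1)+(k+1) = m+(h+k+1)+1 from by ring, Nat.fib_add]; push_cast; ring
    have e4 : (fib (h+k+1) : ℤ) = fib h * fib k + fib (h+1) * fib (k+1) := by
      rw [Nat.fib_add]; push_cast; ring
    have e5 : (fib (h+k+2) : ℤ) = fib (h+1) * fib k + (fib h + fib (h+1)) * fib (k+1) := by
      rw [show h+k+2 = h+1+k+1 from by ring, Nat.fib_add, Nat.fib_add_two]; push_cast; ring
    have hq := fib_quad m
    rw [e1, e2, e3, e4, e5]
    linear_combination ((fib (h+1) : ℤ) * fib (k+1)) * hq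

lemma fibinom_zero (m : ℕ) : fibinom m 0 = 1 := by simp [fibinom]

lemma fibinom_div (m k : ℕ) :
    fibinom m k = (∏ j ∈ range k, (fib (m - j) : ℝ)) / (∏ j ∈ range k, (fib (j+1) : ℝ)) := by
  rw [fibinom, Finset.prod_div_distrib]

lemma fibinom_succ_succ (m k : ℕ) :
    fibinom (m+1) (k+1) = (fib (m+1) : ℝ) / (fib (k+1) : ℝ) * fibinom m k := by
  rw [fibinom_div, fibinom_div, Finset.prod_range_succ' (fun j => (fib (m+1-j) : ℝ)),
    Finset.prod_range_succ (fun j => (fib (j+1) : ℝ))]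
  simp only [Nat.succ_sub_succ, Nat.sub_zero]
  ring

lemma fibinom_top_succ (m k : ℕ) :
    (fib (m+1-k) : ℝ) * fibinom (m+1) k = (fib (m+1) : ℝ) * fibinom m k := by
  rw [fibinom_div, fibinom_div]
  have h1 : (∏ j ∈ range (k+1), (fib (m+1-j) : ℝ))
      = (∏ j ∈ range k, (fib (m+1-j) : ℝ)) * fib (m+1-k) := Finset.prod_range_succ _ _
  have h2 : (∏ j ∈ range (k+1), (fib (m+1-j) : ℝ))
      = (∏ j ∈ range k, (fib (m-j) : ℝ)) * fib (m+1) := by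
    rw [Finset.prod_range_succ' (fun j => (fib (m+1-j) : ℝ))]
    simp only [Nat.succ_sub_succ, Nat.sub_zero]
  rw [mul_div_assoc', mul_div_assoc', mul_comm ((fib (m+1-k) : ℝ)) _, ← h1, h2]
  ring

lemma fibinom_succ (m k : ℕ) :
    fibinom m (k+1) = fibinom m k * ((fib (m-k) : ℝ) / (fib (k+1) : ℝ)) :=
  Finset.prod_range_succ _ _

lemma fib_cast_ne (t : ℕ) : ((fib (t+1) : ℝ)) ≠ 0 := by
  exact_mod_cast (Nat.fib_pos.mpr (Nat.succ_pos t)).ne'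

lemma fib_ratio_prod (c a j : ℕ) (hc : 1 ≤ c) :
    (fib (c+j) : ℝ) * fibinom (c+a+j) a * fibinom (c+j-1) j
    = (fib (a+1) : ℝ) * fibinom (a+j+1) j * fibinom (c+a+j) (a+j+1) := by
  induction j with
  | zero =>
    rw [fibinom_zero, fibinom_zero, show c+a+0 = c+a from rfl, show a+0+1 = a+1 from rfl,
      fibinom_succ (c+a) a, show c+a-a = c from by omega]
    have := fib_cast_ne a
    field_simp
    ring
  | succ j ih =>
    have e1 : fibinom (c+a+(j+1)) a
        = (fib (c+a+j+1) : ℝ) * fibinom (c+a+j) a / fib (c+j+1) := by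
      have := fibinom_top_succ (c+a+j) a
      rw [show c+a+j+1-a = c+j+1 from by omega] at this
      rw [show c+a+(j+1) = c+a+j+1 from by omega]
      field_simp [fib_cast_ne (c+j)] at this ⊢
      linarith [this]
    have e2 : fibinom (c+(j+1)-1) (j+1)
        = (fib (c+j) : ℝ) / fib (j+1) * fibinom (c+j-1) j := by
      rw [show c+(j+1)-1 = (c+j-1)+1 from by omega,
        show (fib (c+j) : ℝ) = (fib ((c+j-1)+1) : ℝ) from by rw [show c+j-1+1 = c+j from by omega]]
      exact fibinom_succ_succ (c+j-1) j
    have e3 : fibinom (a+(j+1)+1) (j+1)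
        = (fib (a+j+2) : ℝ) / fib (j+1) * fibinom (a+j+1) j := by
      rw [show a+(j+1)+1 = (a+j+1)+1 from by omega]
      exact fibinom_succ_succ (a+j+1) j
    have e4 : fibinom (c+a+(j+1)) (a+(j+1)+1)
        = (fib (c+a+j+1) : ℝ) / fib (a+j+2) * fibinom (c+a+j) (a+j+1) := by
      rw [show c+a+(j+1) = (c+a+j)+1 from by omega,
        show a+(j+1)+1 = (a+j+1)+1 from by omega,
        show (fib (a+j+2) : ℝ) = (fib ((a+j+1)+1) : ℝ) from by norm_num]
      exact fibinom_succ_succ (c+a+j) (a+j+1)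
    rw [e1, e2, e3, e4, show c+(j+1) = c+j+1 from by omega]
    have h1 := fib_cast_ne (c+j)
    have h2 := fib_cast_ne j
    have h3 := fib_cast_ne (a+j+1)
    field_simp
    linear_combination ih

/-- `R^{(α)}(n;i,j)`, the claimed inverse-matrix entry. -/
noncomputable def Rfib (α n i j : ℕ) : ℝ :=
  (-1 : ℝ) ^ (n * (α + i + j) - Nat.choose i 2 - Nat.choose j 2) *
    (Nat.fib (α + i + j) : ℝ) * fibinom (α + n + i) (n - j) * fibinom (α + n + j) (n - i) *
    fibinom (α + i + j - 1) i * fibinom (α + i + j - 1) j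

/-- `C^{(α)}(k;i,j)`, the summand of the kernel polynomial coefficient. -/
noncomputable def Cfib (α k i j : ℕ) : ℝ :=
  (-1 : ℝ) ^ (k * (α + i + j) - Nat.choose i 2 - Nat.choose j 2) *
    (Nat.fib (α + 2 * k) : ℝ) * fibinom k i * fibinom k j *
    fibinom (α + k + i - 1) k * fibinom (α + k + j - 1) k

theorem fib_induction_step (α n i j : ℕ) (hα : 1 ≤ α) (hn : 1 ≤ n)
    (hij : j ≤ i) (hi : i ≤ n) :
    Rfib α (n + 1) i j - Rfib α n i j = Cfib α (n + 1) i j := by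
  have hji : j ≤ n := le_trans hij hi
  -- exponent bookkeeping
  have hle : Nat.choose i 2 + Nat.choose j 2 ≤ n * (α + i + j) := by
    have h1 : Nat.choose i 2 ≤ n * i := by
      rw [Nat.choose_two_right]
      calc i * (i-1) / 2 ≤ i * (i-1) := Nat.div_le_self _ _
        _ ≤ i * n := Nat.mul_le_mul_left _ (by omega)
        _ = n * i := Nat.mul_comm _ _
    have h2 : Nat.choose j 2 ≤ n * j := by
      rw [Nat.choose_two_right]
      calc j * (j-1) / 2 ≤ j * (j-1) := Nat.div_le_self _ _
        _ ≤ j * n := Nat.mul_le_mul_left _ (by omega)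
        _ = n * j := Nat.mul_comm _ _
    calc Nat.choose i 2 + Nat.choose j 2 ≤ n * i + n * j := Nat.add_le_add h1 h2
      _ ≤ n * (α + i + j) := by rw [Nat.mul_add, Nat.mul_add]; omega
  have hexp : (n+1) * (α + i + j) - Nat.choose i 2 - Nat.choose j 2
      = (n * (α + i + j) - Nat.choose i 2 - Nat.choose j 2) + (α + i + j) := by
    have h : (n+1) * (α + i + j) = n * (α + i + j) + (α + i + j) := by ring
    omega
  -- fibinom rewrites
  have hB1 : fibinom (α + (n+1) + i) (n + 1 - j)
      = (fib (α+n+1+i) : ℝ) / (fib (n-j+1) : ℝ) * fibinom (α+n+i) (n-j) := by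
    rw [show α + (n+1) + i = (α+n+i)+1 from by omega, show n + 1 - j = (n-j)+1 from by omega,
      fibinom_succ_succ, show (α+n+i)+1 = α+n+1+i from by omega]
  have hB2 : fibinom (α + (n+1) + j) (n + 1 - i)
      = (fib (α+n+1+j) : ℝ) / (fib (n-i+1) : ℝ) * fibinom (α+n+j) (n-i) := by
    rw [show α + (n+1) + j = (α+n+j)+1 from by omega, show n + 1 - i = (n-i)+1 from by omega,
      fibinom_succ_succ, show (α+n+j)+1 = α+n+1+j from by omega]
  have hT1 : fibinom (α + (n+1) + i - 1) (n+1) = fibinom (α+n+i) (n+1) := by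
    rw [show α + (n+1) + i - 1 = α+n+i from by omega]
  have hT2 : fibinom (α + (n+1) + j - 1) (n+1) = fibinom (α+n+j) (n+1) := by
    rw [show α + (n+1) + j - 1 = α+n+j from by omega]
  -- Vajda's identity instance
  have vaj : (fib (α+n+1+i) : ℝ) * fib (α+n+1+j)
      - (-1:ℝ)^(α+i+j) * fib (n-j+1) * fib (n-i+1)
      = (fib (α+i+j) : ℝ) * fib (α+2*(n+1)) := by
    have h := fib_vajda (α+i+j) (n-j+1) (n-i+1)
    rw [show α+i+j+(n-j+1)+(n-i+1) = α+2*(n+1) from by omega,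
      show α+i+j+(n-j+1) = α+n+1+i from by omega,
      show α+i+j+(n-i+1) = α+n+1+j from by omega] at h
    have h' := congrArg (fun z : ℤ => (z : ℝ)) h
    push_cast at h'
    linarith [h']
  -- the two factorial-ratio identities
  have C1 : (fib (α+i+j) : ℝ) * fibinom (α+n+i) (n-j) * fibinom (α+i+j-1) j
      = (fib (n-j+1) : ℝ) * fibinom (n+1) j * fibinom (α+n+i) (n+1) := by
    have h := fib_ratio_prod (α+i) (n-j) j (by omega)
    rw [show α+i+(n-j)+j = α+n+i from by omega, show (n-j)+j+1 = n+1 from by omega,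
      show α+i+j-1 = α+i+j-1 from rfl] at h
    exact h
  have C2 : (fib (α+i+j) : ℝ) * fibinom (α+n+j) (n-i) * fibinom (α+i+j-1) i
      = (fib (n-i+1) : ℝ) * fibinom (n+1) i * fibinom (α+n+j) (n+1) := by
    have h := fib_ratio_prod (α+j) (n-i) i (by omega)
    rw [show α+j+(n-i)+i = α+n+j from by omega, show (n-i)+i+1 = n+1 from by omega,
      show α+j+i = α+i+j from by omega] at h
    exact h
  have hε : ((-1:ℝ)^(α+i+j)) * ((-1:ℝ)^(α+i+j)) = 1 := by
    rw [← mul_pow]; norm_num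
  have f1 := fib_cast_ne (n-j)
  have f2 := fib_cast_ne (n-i)
  rw [Rfib, Rfib, Cfib, hexp, pow_add, hB1, hB2, hT1, hT2]
  field_simp
  linear_combination
    ((-1:ℝ)^(α+i+j)
      * (fib (α+i+j) : ℝ) * fibinom (α+n+i) (n-j) * fibinom (α+n+j) (n-i)
      * fibinom (α+i+j-1) i * fibinom (α+i+j-1) j) * vaj
    + ((fib (n-j+1) : ℝ) * (fib (n-i+1) : ℝ) * (fib (α+i+j) : ℝ)
      * fibinom (α+n+i) (n-j) * fibinom (α+n+j) (n-i)
      * fibinom (α+i+j-1) i * fibinom (α+i+j-1) j) * hε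
    + ((-1:ℝ)^(α+i+j)
      * (fib (α+2*(n+1)) : ℝ) * (fib (α+i+j) : ℝ) * fibinom (α+n+j) (n-i)
      * fibinom (α+i+j-1) i) * C1
    + ((-1:ℝ)^(α+i+j)
      * (fib (α+2*(n+1)) : ℝ) * (fib (n-j+1) : ℝ) * fibinom (n+1) j
      * fibinom (α+n+i) (n+1)) * C2
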